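/- Under the (A,B) signGD dynamics: (i) for every t ∈ ℕ there exist integers m, n ∈ ℤ with A(t) = A(0) + m·(a/3) and B(t) = B(0) + n·(b/2); (ii) consequently, if the initial pair (A(0), B(0)) is a random vector in ℝ² whose law is absolutely continuous with respect to two-dimensional Lebesgue measure, then almost surely A(t) ≠ 0 and B(t) ≠ 0 for every t ∈ ℕ; that is, neither A nor B can be reduced to exactly 0 almost surely. -/

import Mathlib

/-- The frequency-domain `(A,B)` signGD error dynamics with `a = σ₀²η`, `b = σ₁²η`:
`A(t+1) = A(t) − (a/3)(sgn(A+B) + sgn(A) + sgn(A−B))` and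
`B(t+1) = B(t) − (b/2)(sgn(A+B) − sgn(A−B))`. -/
def SignGDDyn (σ0sq σ1sq η : ℝ) (A B : ℕ → ℝ) : Prop :=
  (∀ t, A (t+1) = A t - σ0sq * η / 3 *
      (Real.sign (A t + B t) + Real.sign (A t) + Real.sign (A t - B t))) ∧
  (∀ t, B (t+1) = B t - σ1sq * η / 2 *
      (Real.sign (A t + B t) - Real.sign (A t - B t)))

open MeasureTheory

lemma sign_is_int (x : ℝ) : ∃ k : ℤ, Real.sign x = (k : ℝ) := by
  rcases lt_trichotomy x 0 with h | h | h
  · exact ⟨-1, by simp [Real.sign_of_neg h]⟩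
  · exact ⟨0, by simp [h, Real.sign_zero]⟩
  · exact ⟨1, by simp [Real.sign_of_pos h]⟩

lemma signGD_lattice (σ0sq σ1sq η : ℝ) (A B : ℕ → ℝ)
    (hdyn : SignGDDyn σ0sq σ1sq η A B) :
    ∀ t, ∃ m n : ℤ,
      A t = A 0 + m * (σ0sq * η / 3) ∧ B t = B 0 + n * (σ1sq * η / 2) := by
  obtain ⟨hA, hB⟩ := hdyn
  intro t
  induction t with
  | zero => exact ⟨0, 0, by simp, by simp⟩
  | succ t ih =>
    obtain ⟨m, n, hm, hn⟩ := ih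
    obtain ⟨k1, hk1⟩ := sign_is_int (A t + B t)
    obtain ⟨k2, hk2⟩ := sign_is_int (A t)
    obtain ⟨k3, hk3⟩ := sign_is_int (A t - B t)
    refine ⟨m - (k1 + k2 + k3), n - (k1 - k3), ?_, ?_⟩
    · rw [hA t, hk1, hk2, hk3, hm]; push_cast; ring
    · rw [hB t, hk1, hk3, hn]; push_cast; ring

/-- (i) Every iterate `(A(t), B(t))` lies on the lattice
`(A(0) + (a/3)ℤ) × (B(0) + (b/2)ℤ)`; (ii) hence if the initial pair is a random
vector whose law is absolutely continuous w.r.t. Lebesgue measure on `ℝ²`, then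
almost surely neither `A` nor `B` is ever reduced to exactly `0`. -/
theorem signGD_never_exactly_zero (σ0sq σ1sq η : ℝ)
    (h0 : 0 < σ0sq) (h1 : 0 < σ1sq) (hη : 0 < η) :
    (∀ A B : ℕ → ℝ, SignGDDyn σ0sq σ1sq η A B →
      ∀ t, ∃ m n : ℤ,
        A t = A 0 + m * (σ0sq * η / 3) ∧ B t = B 0 + n * (σ1sq * η / 2)) ∧
    (∀ (Ω : Type) [MeasurableSpace Ω] (P : Measure Ω),
      IsProbabilityMeasure P →
      ∀ A B : Ω → ℕ → ℝ,
        (∀ ω, SignGDDyn σ0sq σ1sq η (A ω) (B ω)) →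
        Measurable (fun ω => (A ω 0, B ω 0)) →
        (P.map (fun ω => (A ω 0, B ω 0))).AbsolutelyContinuous
          (volume : Measure (ℝ × ℝ)) →
        ∀ᵐ ω ∂P, ∀ t, A ω t ≠ 0 ∧ B ω t ≠ 0) := by
  constructor
  · exact fun A B h => signGD_lattice σ0sq σ1sq η A B h
  · intro Ω _ P _ A B hdyn hmeas habs
    set T1 : Set ℝ := {x | ∃ m : ℤ, x = -(m * (σ0sq * η / 3))} with hT1
    set T2 : Set ℝ := {x | ∃ n : ℤ, x = -(n * (σ1sq * η / 2))} with hT2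
    have hT1c : T1.Countable := by
      have : T1 = Set.range (fun m : ℤ => -(m * (σ0sq * η / 3))) := by
        ext x; simp [hT1, Set.range, eq_comm]
      rw [this]; exact Set.countable_range _
    have hT2c : T2.Countable := by
      have : T2 = Set.range (fun n : ℤ => -(n * (σ1sq * η / 2))) := by
        ext x; simp [hT2, Set.range, eq_comm]
      rw [this]; exact Set.countable_range _
    set S : Set (ℝ × ℝ) := (T1 ×ˢ Set.univ) ∪ (Set.univ ×ˢ T2) with hS
    have hSm : MeasurableSet S :=
      ((hT1c.measurableSet.prod MeasurableSet.univ)).union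
        (MeasurableSet.univ.prod hT2c.measurableSet)
    have hSnull : (volume : Measure (ℝ × ℝ)) S = 0 := by
      have h1' : (volume : Measure (ℝ × ℝ)) (T1 ×ˢ Set.univ) = 0 := by
        rw [Measure.volume_eq_prod, Measure.prod_prod, hT1c.measure_zero, zero_mul]
      have h2' : (volume : Measure (ℝ × ℝ)) (Set.univ ×ˢ T2) = 0 := by
        rw [Measure.volume_eq_prod, Measure.prod_prod, hT2c.measure_zero, mul_zero]
      exact measure_union_null h1' h2'
    have hmap : (P.map (fun ω => (A ω 0, B ω 0))) S = 0 := habs hSnull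
    rw [Measure.map_apply hmeas hSm] at hmap
    have hae : ∀ᵐ ω ∂P, (A ω 0, B ω 0) ∉ S := by
      rw [MeasureTheory.ae_iff]
      simp only [not_not]; exact hmap
    filter_upwards [hae] with ω hω t
    obtain ⟨m, n, hm, hn⟩ := signGD_lattice σ0sq σ1sq η (A ω) (B ω) (hdyn ω) t
    constructor
    · intro hzero
      apply hω
      left
      refine ⟨⟨m, ?_⟩, trivial⟩
      rw [hzero] at hm; linarith
    · intro hzero
      apply hω
      right
      refine ⟨trivial, ⟨n, ?_⟩⟩
      rw [hzero] at hn; linarith
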